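/- For every natural number n ≥ 2, the Casoratian w_n = b_{n+1}·a_n − a_{n+1}·b_n equals 6/(n+1)³. -/

import Mathlib

set_option linter.unusedVariables false


/-- `z n = ∑_{m=1}^n 1/m³`. -/
def zseq (n : ℕ) : ℚ := ∑ m ∈ Finset.Icc 1 n, 1 / (m : ℚ) ^ 3

/-- `a n = ∑_{k=0}^n C(n,k)² C(n+k,k)²`. -/
def aseq (n : ℕ) : ℚ :=
  ∑ k ∈ Finset.range (n + 1), (n.choose k : ℚ) ^ 2 * ((n + k).choose k : ℚ) ^ 2

/-- `b n = a n * z n + ∑_{k=1}^n ∑_{m=1}^k (-1)^{m+1} C(n,k)² C(n+k,k)²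
      / (2 m³ C(n,m) C(n+m,m))`. -/
def bseq (n : ℕ) : ℚ :=
  aseq n * zseq n +
    ∑ k ∈ Finset.Icc 1 n, ∑ m ∈ Finset.Icc 1 k,
      (-1 : ℚ) ^ (m + 1) * (n.choose k : ℚ) ^ 2 * ((n + k).choose k : ℚ) ^ 2 /
        (2 * (m : ℚ) ^ 3 * (n.choose m : ℚ) * ((n + m).choose m : ℚ))

def fq (n k : ℕ) : ℚ := (n.choose k : ℚ) * ((n + k).choose k : ℚ)

lemma fq_ne_zero {n k : ℕ} (h : k ≤ n) : fq n k ≠ 0 := by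
  have h1 : 0 < n.choose k := Nat.choose_pos h
  have h2 : 0 < (n + k).choose k := Nat.choose_pos (by omega)
  simp [fq]
  constructor <;> positivity

lemma fq_eq_zero {n k : ℕ} (h : n < k) : fq n k = 0 := by
  simp [fq, Nat.choose_eq_zero_of_lt h]

lemma fq_zero (n : ℕ) : fq n 0 = 1 := by simp [fq]

lemma fq_shift (n k : ℕ) (hk : k ≤ n + 1) :
    fq (n + 1) k * ((n : ℚ) + 1 - k) = fq n k * ((n : ℚ) + 1 + k) := by
  have e : n + 1 + k = n + k + 1 := by omega
  have h1 : ((n + 1).choose k : ℚ) * ((n : ℚ) + 1 - k) = (n.choose k : ℚ) * ((n : ℚ) + 1) := by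
    have h := Nat.choose_mul_succ_eq n k
    have hc : ((n + 1 - k : ℕ) : ℚ) = (n : ℚ) + 1 - (k : ℚ) := by
      rw [Nat.cast_sub hk]; push_cast; ring
    have := congrArg (Nat.cast : ℕ → ℚ) h
    push_cast at this
    rw [← hc]; linarith [this]
  have h2 : ((n + k + 1).choose k : ℚ) * ((n : ℚ) + 1) = ((n + k).choose k : ℚ) * ((n : ℚ) + 1 + k) := by
    have h := Nat.add_one_mul_choose_eq (n + k) n
    have e1 : (n + k).choose n = (n + k).choose k := by
      rw [← Nat.choose_symm (by omega : k ≤ n + k)]; congr 1; omega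
    have e2 : (n + k + 1).choose (n + 1) = (n + k + 1).choose k := by
      rw [← Nat.choose_symm (by omega : k ≤ n + k + 1)]; congr 1; omega
    rw [e1, e2] at h
    have := congrArg (Nat.cast : ℕ → ℚ) h
    push_cast at this
    linarith [this]
  simp only [fq, e]
  linear_combination (((n + k + 1).choose k : ℚ)) * h1 + ((n.choose k : ℚ)) * h2

lemma fq_succ_k (n k : ℕ) (hk : k ≤ n) :
    fq n (k + 1) * ((k : ℚ) + 1) ^ 2 = fq n k * ((n : ℚ) - k) * ((n : ℚ) + k + 1) := by
  have e : n + (k + 1) = n + k + 1 := by omega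
  have h1 : (n.choose (k + 1) : ℚ) * ((k : ℚ) + 1) = (n.choose k : ℚ) * ((n : ℚ) - k) := by
    have h := Nat.choose_succ_right_eq n k
    have hc : ((n - k : ℕ) : ℚ) = (n : ℚ) - (k : ℚ) := by
      rw [Nat.cast_sub hk]
    have := congrArg (Nat.cast : ℕ → ℚ) h
    push_cast at this
    rw [← hc]; linarith [this]
  have h2 : ((n + k + 1).choose (k + 1) : ℚ) * ((k : ℚ) + 1) = ((n + k).choose k : ℚ) * ((n : ℚ) + k + 1) := by
    have h := Nat.add_one_mul_choose_eq (n + k) k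
    have := congrArg (Nat.cast : ℕ → ℚ) h
    push_cast at this
    linarith [this]
  simp only [fq, e]
  linear_combination (((n + k + 1).choose (k + 1) : ℚ) * ((k:ℚ)+1)) * h1 + ((n.choose k : ℚ) * ((n:ℚ) - k)) * h2

lemma fq_central (n : ℕ) :
    fq (n + 1) (n + 1) * ((n : ℚ) + 1) = fq n n * (2 * (2 * (n : ℚ) + 1)) := by
  have h := Nat.succ_mul_centralBinom_succ n
  unfold Nat.centralBinom at h
  have := congrArg (Nat.cast : ℕ → ℚ) h
  push_cast at this
  have e1 : n + 1 + (n + 1) = 2 * (n + 1) := by omega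
  have e2 : n + n = 2 * n := by omega
  simp only [fq, e1, e2, Nat.choose_self]
  push_cast
  linarith [this]

def cq (n k : ℕ) : ℚ := ∑ m ∈ Finset.Icc 1 k, (-1 : ℚ) ^ (m + 1) / (2 * (m : ℚ) ^ 3 * fq n m)

def muq (n k : ℕ) : ℚ := zseq n + cq n k

lemma cq_succ (n k : ℕ) : cq n (k + 1) = cq n k + (-1 : ℚ) ^ k / (2 * ((k : ℚ) + 1) ^ 3 * fq n (k + 1)) := by
  unfold cq
  rw [Finset.sum_Icc_succ_top (by omega : 1 ≤ k + 1)]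
  push_cast
  congr 1
  rw [pow_succ, pow_succ]
  ring

lemma muq_succ_k (n k : ℕ) :
    muq n (k + 1) = muq n k + (-1 : ℚ) ^ k / (2 * ((k : ℚ) + 1) ^ 3 * fq n (k + 1)) := by
  unfold muq; rw [cq_succ]; ring

lemma zseq_succ (n : ℕ) : zseq (n + 1) = zseq n + 1 / ((n : ℚ) + 1) ^ 3 := by
  unfold zseq
  rw [Finset.sum_Icc_succ_top (by omega : 1 ≤ n + 1)]
  push_cast; ring

lemma muq_shift (n : ℕ) : ∀ k : ℕ, k ≤ n →
    muq (n + 1) k = muq n k + (-1 : ℚ) ^ k / (((n : ℚ) + 1) ^ 2 * ((n : ℚ) + k + 1) * fq n k) := by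
  intro k
  induction k with
  | zero =>
    intro _
    simp only [muq, cq, Finset.Icc_eq_empty_of_lt (by omega : (1:ℕ) > 0), Finset.sum_empty,
      fq_zero, zseq_succ]
    push_cast; ring
  | succ j ih =>
    intro hj
    have hjn : j ≤ n := by omega
    have ihj := ih hjn
    rw [muq_succ_k (n+1) j, muq_succ_k n j, ihj]
    have hx : fq n j ≠ 0 := fq_ne_zero hjn
    have hx1 : fq n (j + 1) ≠ 0 := fq_ne_zero hj
    have hdn : (n : ℚ) - j ≠ 0 := by
      have : (j : ℚ) < n := by exact_mod_cast (by omega : j < n)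
      linarith
    have hd2 : (n : ℚ) + j + 2 ≠ 0 := by positivity
    have hj1 : ((j : ℚ) + 1) ≠ 0 := by positivity
    have hR2 := fq_succ_k n j hjn
    have hR1 := fq_shift n (j + 1) (by omega)
    push_cast at hR1
    -- fq (n+1) (j+1) = fq n (j+1) * (n+j+2) / (n-j)
    have hy1 : fq (n + 1) (j + 1) = fq n (j + 1) * ((n : ℚ) + j + 2) / ((n : ℚ) - j) := by
      rw [eq_div_iff hdn]
      linear_combination hR1
    -- fq n (j+1) = fq n j * (n-j) * (n+j+1) / (j+1)^2
    have hx1e : fq n (j + 1) = fq n j * ((n : ℚ) - j) * ((n : ℚ) + j + 1) / ((j : ℚ) + 1) ^ 2 := by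
      rw [eq_div_iff (by positivity)]
      linear_combination hR2
    rw [hy1, hx1e]
    have hnj1 : (n : ℚ) + j + 1 ≠ 0 := by positivity
    have hn1 : (n : ℚ) + 1 ≠ 0 := by positivity
    push_cast
    field_simp
    ring

def Pq (m : ℕ) : ℚ := 34 * (m : ℚ) ^ 3 + 153 * (m : ℚ) ^ 2 + 231 * (m : ℚ) + 117

def Gq (m : ℕ) : ℕ → ℚ
  | 0 => 0
  | k + 1 => 4 * (2 * (m : ℚ) + 3) * ((k : ℚ) * (2 * (k : ℚ) + 1) - (2 * (m : ℚ) + 3) ^ 2)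
      * fq (m + 1) k ^ 2

lemma cert_a (m k : ℕ) (hk : k ≤ m + 2) :
    ((m : ℚ) + 2) ^ 3 * fq (m + 2) k ^ 2 - Pq m * fq (m + 1) k ^ 2
      + ((m : ℚ) + 1) ^ 3 * fq m k ^ 2 = Gq m (k + 1) - Gq m k := by
  by_cases h00 : k = 0
  · subst h00
    simp only [Gq, fq_zero, Pq]
    push_cast; ring
  by_cases hg : k ≤ m
  · obtain ⟨j, rfl⟩ : ∃ j, k = j + 1 := ⟨k - 1, by omega⟩
    have hj : j + 1 ≤ m := hg
    have hx : fq (m + 1) (j + 1) ≠ 0 := fq_ne_zero (by omega)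
    have hd1 : (m : ℚ) + 1 - j ≠ 0 := by
      have : (j : ℚ) ≤ m := by exact_mod_cast (by omega : j ≤ m)
      linarith
    have hd2 : (m : ℚ) + j + 2 ≠ 0 := by positivity
    have h2 : fq (m + 2) (j + 1) = fq (m + 1) (j + 1) * ((m : ℚ) + j + 3) / ((m : ℚ) + 1 - j) := by
      rw [eq_div_iff hd1]
      have := fq_shift (m + 1) (j + 1) (by omega)
      push_cast at this ⊢
      linear_combination this
    have h0 : fq m (j + 1) = fq (m + 1) (j + 1) * ((m : ℚ) - j) / ((m : ℚ) + j + 2) := by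
      rw [eq_div_iff hd2]
      have := fq_shift m (j + 1) (by omega)
      push_cast at this ⊢
      linear_combination -this
    have hprev : fq (m + 1) j
        = fq (m + 1) (j + 1) * ((j : ℚ) + 1) ^ 2 / (((m : ℚ) + 1 - j) * ((m : ℚ) + j + 2)) := by
      rw [eq_div_iff (by exact mul_ne_zero hd1 hd2)]
      have := fq_succ_k (m + 1) j (by omega)
      push_cast at this ⊢
      linear_combination -this
    simp only [Gq]
    rw [h2, h0, hprev, Pq]
    push_cast
    field_simp
    ring
  rcases (by omega : k = m + 1 ∨ k = m + 2) with rfl | rfl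
  · -- k = m + 1
    have hx : fq (m + 1) (m + 1) ≠ 0 := fq_ne_zero le_rfl
    have h2 : fq (m + 2) (m + 1) = fq (m + 1) (m + 1) * (2 * (m : ℚ) + 3) := by
      have := fq_shift (m + 1) (m + 1) (by omega)
      push_cast at this
      linear_combination this
    have h0 : fq m (m + 1) = 0 := fq_eq_zero (by omega)
    have hprev : fq (m + 1) m = fq (m + 1) (m + 1) * ((m : ℚ) + 1) / 2 := by
      have hm1 : ((m : ℚ) + 1) ≠ 0 := by positivity
      rw [eq_div_iff (by norm_num : (2:ℚ) ≠ 0)]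
      apply mul_right_cancel₀ hm1
      have := fq_succ_k (m + 1) m (by omega)
      push_cast at this ⊢
      linear_combination -this
    have e1 : m + 1 + 1 = m + 2 := by omega
    simp only [Gq, e1]
    rw [h2, h0, hprev, Pq]
    push_cast
    field_simp
    ring
  · -- k = m + 2
    have hx : fq (m + 1) (m + 1) ≠ 0 := fq_ne_zero le_rfl
    have hm2 : (m : ℚ) + 2 ≠ 0 := by positivity
    have h2 : fq (m + 2) (m + 2) = fq (m + 1) (m + 1) * (2 * (2 * (m : ℚ) + 3)) / ((m : ℚ) + 2) := by
      rw [eq_div_iff hm2]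
      have := fq_central (m + 1)
      push_cast at this ⊢
      linear_combination this
    have h1 : fq (m + 1) (m + 2) = 0 := fq_eq_zero (by omega)
    have h0 : fq m (m + 2) = 0 := fq_eq_zero (by omega)
    have e1 : m + 2 + 1 = m + 2 + 1 := rfl
    simp only [Gq]
    rw [h2, h1, h0, Pq]
    push_cast
    field_simp
    ring

def Hq (m : ℕ) : ℕ → ℚ
  | 0 => 0
  | k + 1 => 4 * (2 * (m : ℚ) + 3) * ((k : ℚ) * (2 * (k : ℚ) + 1) - (2 * (m : ℚ) + 3) ^ 2)
        * fq (m + 1) k ^ 2 * muq (m + 1) k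
      + 5 * (2 * (m : ℚ) + 3) * (-1 : ℚ) ^ (k + 1) * (k : ℚ)
        / (((m : ℚ) + 1) * ((m : ℚ) + 2)) * fq (m + 1) k

set_option maxHeartbeats 3000000 in
lemma cert_b (m k : ℕ) (hk : k ≤ m + 2) :
    ((m : ℚ) + 2) ^ 3 * fq (m + 2) k ^ 2 * muq (m + 2) k
      - Pq m * fq (m + 1) k ^ 2 * muq (m + 1) k
      + ((m : ℚ) + 1) ^ 3 * fq m k ^ 2 * muq m k = Hq m (k + 1) - Hq m k := by
  by_cases h00 : k = 0
  · subst h00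
    have hmu2 : muq (m + 2) 0 = muq (m + 1) 0 + 1 / (((m : ℚ) + 2) ^ 3) := by
      have := muq_shift (m + 1) 0 (by omega)
      rw [fq_zero] at this
      push_cast at this
      rw [this]; ring
    have hmu0 : muq m 0 = muq (m + 1) 0 - 1 / (((m : ℚ) + 1) ^ 3) := by
      have := muq_shift m 0 (by omega)
      rw [fq_zero] at this
      push_cast at this
      rw [this]; ring
    have hm1 : ((m : ℚ) + 1) ≠ 0 := by positivity
    have hm2 : ((m : ℚ) + 2) ≠ 0 := by positivity
    simp only [Hq, fq_zero, Pq]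
    rw [hmu2, hmu0]
    push_cast
    field_simp
    ring
  by_cases hg : k ≤ m
  · obtain ⟨j, rfl⟩ : ∃ j, k = j + 1 := ⟨k - 1, by omega⟩
    have hj : j + 1 ≤ m := hg
    have hx : fq (m + 1) (j + 1) ≠ 0 := fq_ne_zero (by omega)
    have hd1 : (m : ℚ) + 1 - j ≠ 0 := by
      have : (j : ℚ) ≤ m := by exact_mod_cast (by omega : j ≤ m)
      linarith
    have hdm : (m : ℚ) - j ≠ 0 := by
      have : (j : ℚ) < m := by exact_mod_cast (by omega : j < m)
      linarith
    have hd2 : (m : ℚ) + j + 2 ≠ 0 := by positivity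
    have hd3 : (m : ℚ) + j + 3 ≠ 0 := by positivity
    have hm1 : ((m : ℚ) + 1) ≠ 0 := by positivity
    have hm2 : ((m : ℚ) + 2) ≠ 0 := by positivity
    have hj1 : ((j : ℚ) + 1) ≠ 0 := by positivity
    have h2 : fq (m + 2) (j + 1) = fq (m + 1) (j + 1) * ((m : ℚ) + j + 3) / ((m : ℚ) + 1 - j) := by
      rw [eq_div_iff hd1]
      have := fq_shift (m + 1) (j + 1) (by omega)
      push_cast at this ⊢
      linear_combination this
    have h0 : fq m (j + 1) = fq (m + 1) (j + 1) * ((m : ℚ) - j) / ((m : ℚ) + j + 2) := by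
      rw [eq_div_iff hd2]
      have := fq_shift m (j + 1) (by omega)
      push_cast at this ⊢
      linear_combination -this
    have hprev : fq (m + 1) j
        = fq (m + 1) (j + 1) * ((j : ℚ) + 1) ^ 2 / (((m : ℚ) + 1 - j) * ((m : ℚ) + j + 2)) := by
      rw [eq_div_iff (by exact mul_ne_zero hd1 hd2)]
      have := fq_succ_k (m + 1) j (by omega)
      push_cast at this ⊢
      linear_combination -this
    have hmu2 : muq (m + 2) (j + 1) = muq (m + 1) (j + 1)
        + (-1 : ℚ) ^ (j + 1) / (((m : ℚ) + 2) ^ 2 * ((m : ℚ) + j + 3) * fq (m + 1) (j + 1)) := by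
      have := muq_shift (m + 1) (j + 1) (by omega)
      push_cast at this ⊢
      linear_combination this
    have hmu0 : muq m (j + 1) = muq (m + 1) (j + 1)
        - (-1 : ℚ) ^ (j + 1) / (((m : ℚ) + 1) ^ 2 * ((m : ℚ) + j + 2)
            * (fq (m + 1) (j + 1) * ((m : ℚ) - j) / ((m : ℚ) + j + 2))) := by
      have := muq_shift m (j + 1) (by omega)
      rw [h0] at this
      push_cast at this ⊢
      linear_combination -this
    have hmuprev : muq (m + 1) j = muq (m + 1) (j + 1)
        - (-1 : ℚ) ^ j / (2 * ((j : ℚ) + 1) ^ 3 * fq (m + 1) (j + 1)) := by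
      have := muq_succ_k (m + 1) j
      linear_combination -this
    simp only [Hq]
    rw [h2, h0, hprev, hmu2, hmu0, hmuprev, Pq]
    push_cast
    simp only [pow_succ]
    field_simp
    ring
  rcases (by omega : k = m + 1 ∨ k = m + 2) with rfl | rfl
  · -- k = m + 1
    have hx : fq (m + 1) (m + 1) ≠ 0 := fq_ne_zero le_rfl
    have hm1 : ((m : ℚ) + 1) ≠ 0 := by positivity
    have hm2 : ((m : ℚ) + 2) ≠ 0 := by positivity
    have hm3 : (2 * (m : ℚ) + 3) ≠ 0 := by positivity
    have h2 : fq (m + 2) (m + 1) = fq (m + 1) (m + 1) * (2 * (m : ℚ) + 3) := by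
      have := fq_shift (m + 1) (m + 1) (by omega)
      push_cast at this
      linear_combination this
    have h0 : fq m (m + 1) = 0 := fq_eq_zero (by omega)
    have hprev : fq (m + 1) m = fq (m + 1) (m + 1) * ((m : ℚ) + 1) / 2 := by
      rw [eq_div_iff (by norm_num : (2:ℚ) ≠ 0)]
      apply mul_right_cancel₀ hm1
      have := fq_succ_k (m + 1) m (by omega)
      push_cast at this ⊢
      linear_combination -this
    have hmu2 : muq (m + 2) (m + 1) = muq (m + 1) (m + 1)
        + (-1 : ℚ) ^ (m + 1) / (((m : ℚ) + 2) ^ 2 * (2 * (m : ℚ) + 3) * fq (m + 1) (m + 1)) := by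
      have := muq_shift (m + 1) (m + 1) (by omega)
      push_cast at this ⊢
      linear_combination this
    have hmuprev : muq (m + 1) m = muq (m + 1) (m + 1)
        - (-1 : ℚ) ^ m / (2 * ((m : ℚ) + 1) ^ 3 * fq (m + 1) (m + 1)) := by
      have := muq_succ_k (m + 1) m
      linear_combination -this
    have e1 : m + 1 + 1 = m + 2 := by omega
    simp only [Hq, e1]
    rw [h2, h0, hprev, hmu2, hmuprev, Pq]
    push_cast
    simp only [pow_succ]
    field_simp
    ring
  · -- k = m + 2
    have hx : fq (m + 1) (m + 1) ≠ 0 := fq_ne_zero le_rfl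
    have hm1 : ((m : ℚ) + 1) ≠ 0 := by positivity
    have hm2 : ((m : ℚ) + 2) ≠ 0 := by positivity
    have hm3 : (2 * (m : ℚ) + 3) ≠ 0 := by positivity
    have h2 : fq (m + 2) (m + 2) = fq (m + 1) (m + 1) * (2 * (2 * (m : ℚ) + 3)) / ((m : ℚ) + 2) := by
      rw [eq_div_iff hm2]
      have := fq_central (m + 1)
      push_cast at this ⊢
      linear_combination this
    have h1 : fq (m + 1) (m + 2) = 0 := fq_eq_zero (by omega)
    have h0 : fq m (m + 2) = 0 := fq_eq_zero (by omega)
    have hprev : fq (m + 1) m = fq (m + 1) (m + 1) * ((m : ℚ) + 1) / 2 := by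
      rw [eq_div_iff (by norm_num : (2:ℚ) ≠ 0)]
      apply mul_right_cancel₀ hm1
      have := fq_succ_k (m + 1) m (by omega)
      push_cast at this ⊢
      linear_combination -this
    have hmu21 : muq (m + 2) (m + 1) = muq (m + 1) (m + 1)
        + (-1 : ℚ) ^ (m + 1) / (((m : ℚ) + 2) ^ 2 * (2 * (m : ℚ) + 3) * fq (m + 1) (m + 1)) := by
      have := muq_shift (m + 1) (m + 1) (by omega)
      push_cast at this ⊢
      linear_combination this
    have hmu22 : muq (m + 2) (m + 2) = muq (m + 2) (m + 1)
        + (-1 : ℚ) ^ (m + 1) / (2 * ((m : ℚ) + 2) ^ 3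
            * (fq (m + 1) (m + 1) * (2 * (2 * (m : ℚ) + 3)) / ((m : ℚ) + 2))) := by
      have := muq_succ_k (m + 2) (m + 1)
      have e1 : m + 1 + 1 = m + 2 := rfl
      rw [e1, h2] at this
      push_cast at this ⊢
      linear_combination this
    have hmuprev : muq (m + 1) m = muq (m + 1) (m + 1)
        - (-1 : ℚ) ^ m / (2 * ((m : ℚ) + 1) ^ 3 * fq (m + 1) (m + 1)) := by
      have := muq_succ_k (m + 1) m
      linear_combination -this
    simp only [Hq]
    rw [hmu22, hmu21, h2, h1, h0, Pq]
    push_cast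
    simp only [pow_succ]
    field_simp
    ring

lemma aseq_eq (n : ℕ) : aseq n = ∑ k ∈ Finset.range (n + 1), fq n k ^ 2 := by
  unfold aseq fq
  exact Finset.sum_congr rfl fun k _ => by rw [mul_pow]

lemma bseq_eq (n : ℕ) : bseq n = ∑ k ∈ Finset.range (n + 1), fq n k ^ 2 * muq n k := by
  unfold bseq muq
  have h1 : ∑ k ∈ Finset.range (n + 1), fq n k ^ 2 * (zseq n + cq n k)
      = (∑ k ∈ Finset.range (n + 1), fq n k ^ 2) * zseq n
        + ∑ k ∈ Finset.range (n + 1), fq n k ^ 2 * cq n k := by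
    rw [Finset.sum_mul, ← Finset.sum_add_distrib]
    exact Finset.sum_congr rfl fun k _ => by ring
  rw [h1, ← aseq_eq]
  congr 1
  rw [Finset.sum_range_succ']
  have h0 : fq n 0 ^ 2 * cq n 0 = 0 := by simp [cq]
  rw [h0, add_zero]
  rw [show ∑ k ∈ Finset.Icc 1 n, ∑ m ∈ Finset.Icc 1 k,
      (-1 : ℚ) ^ (m + 1) * (n.choose k : ℚ) ^ 2 * ((n + k).choose k : ℚ) ^ 2 /
        (2 * (m : ℚ) ^ 3 * (n.choose m : ℚ) * ((n + m).choose m : ℚ))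
      = ∑ i ∈ Finset.range n, fq n (i + 1) ^ 2 * cq n (i + 1) from ?_]
  · rw [← Finset.Ico_add_one_right_eq_Icc, Finset.sum_Ico_eq_sum_range]
    refine Finset.sum_congr (by norm_num) fun i _ => ?_
    rw [Nat.add_comm 1 i]
    unfold cq
    rw [Finset.mul_sum]
    refine Finset.sum_congr rfl fun m _ => ?_
    unfold fq
    ring

lemma rec_a (m : ℕ) :
    ((m : ℚ) + 2) ^ 3 * aseq (m + 2) - Pq m * aseq (m + 1)
      + ((m : ℚ) + 1) ^ 3 * aseq m = 0 := by
  have h1 : ∑ k ∈ Finset.range (m + 3),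
      (((m : ℚ) + 2) ^ 3 * fq (m + 2) k ^ 2 - Pq m * fq (m + 1) k ^ 2
        + ((m : ℚ) + 1) ^ 3 * fq m k ^ 2) = Gq m (m + 3) - Gq m 0 := by
    rw [← Finset.sum_range_sub (Gq m) (m + 3)]
    refine Finset.sum_congr rfl fun k hk => ?_
    exact cert_a m k (by have := Finset.mem_range.mp hk; omega)
  rw [Finset.sum_add_distrib, Finset.sum_sub_distrib, ← Finset.mul_sum, ← Finset.mul_sum,
    ← Finset.mul_sum] at h1
  have e2 : Gq m (m + 3) = 0 := by
    show (4 : ℚ) * _ * _ * fq (m + 1) (m + 2) ^ 2 = 0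
    rw [fq_eq_zero (by omega)]; ring
  have sa2 : ∑ k ∈ Finset.range (m + 3), fq (m + 2) k ^ 2 = aseq (m + 2) := (aseq_eq (m + 2)).symm
  have sa1 : ∑ k ∈ Finset.range (m + 3), fq (m + 1) k ^ 2 = aseq (m + 1) := by
    rw [Finset.sum_range_succ, fq_eq_zero (by omega : m + 1 < m + 2), ← aseq_eq]
    ring
  have sa0 : ∑ k ∈ Finset.range (m + 3), fq m k ^ 2 = aseq m := by
    rw [Finset.sum_range_succ, Finset.sum_range_succ, fq_eq_zero (by omega : m < m + 2),
      fq_eq_zero (by omega : m < m + 1), ← aseq_eq]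
    ring
  rw [sa2, sa1, sa0, e2] at h1
  simpa [Gq, Hq] using h1

lemma rec_b (m : ℕ) :
    ((m : ℚ) + 2) ^ 3 * bseq (m + 2) - Pq m * bseq (m + 1)
      + ((m : ℚ) + 1) ^ 3 * bseq m = 0 := by
  have h1 : ∑ k ∈ Finset.range (m + 3),
      (((m : ℚ) + 2) ^ 3 * (fq (m + 2) k ^ 2 * muq (m + 2) k)
        - Pq m * (fq (m + 1) k ^ 2 * muq (m + 1) k)
        + ((m : ℚ) + 1) ^ 3 * (fq m k ^ 2 * muq m k)) = Hq m (m + 3) - Hq m 0 := by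
    rw [← Finset.sum_range_sub (Hq m) (m + 3)]
    refine Finset.sum_congr rfl fun k hk => ?_
    have := cert_b m k (by have := Finset.mem_range.mp hk; omega)
    linear_combination this
  rw [Finset.sum_add_distrib, Finset.sum_sub_distrib, ← Finset.mul_sum, ← Finset.mul_sum,
    ← Finset.mul_sum] at h1
  have e2 : Hq m (m + 3) = 0 := by
    show (4 : ℚ) * _ * _ * fq (m + 1) (m + 2) ^ 2 * muq (m + 1) (m + 2)
        + _ * fq (m + 1) (m + 2) = 0
    rw [fq_eq_zero (by omega)]; ring
  have sb2 : ∑ k ∈ Finset.range (m + 3), fq (m + 2) k ^ 2 * muq (m + 2) k = bseq (m + 2) :=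
    (bseq_eq (m + 2)).symm
  have sb1 : ∑ k ∈ Finset.range (m + 3), fq (m + 1) k ^ 2 * muq (m + 1) k = bseq (m + 1) := by
    rw [Finset.sum_range_succ, fq_eq_zero (by omega : m + 1 < m + 2), ← bseq_eq]
    ring
  have sb0 : ∑ k ∈ Finset.range (m + 3), fq m k ^ 2 * muq m k = bseq m := by
    rw [Finset.sum_range_succ, Finset.sum_range_succ, fq_eq_zero (by omega : m < m + 2),
      fq_eq_zero (by omega : m < m + 1), ← bseq_eq]
    ring
  rw [sb2, sb1, sb0, e2] at h1
  simpa [Gq, Hq] using h1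

lemma base1 : bseq 2 * aseq 1 - aseq 2 * bseq 1 = 3 / 4 := by
  have e1 : Finset.Icc (1:ℕ) 1 = {1} := rfl
  have e2 : Finset.Icc (1:ℕ) 2 = {1, 2} := rfl
  norm_num [bseq, aseq, zseq, e1, e2, Finset.sum_range_succ, Nat.choose]

lemma main (n : ℕ) (hn : 1 ≤ n) :
    bseq (n + 1) * aseq n - aseq (n + 1) * bseq n = 6 / ((n : ℚ) + 1) ^ 3 := by
  induction n, hn using Nat.le_induction with
  | base => norm_num [base1]
  | succ n hn ih =>
    have ha := rec_a n
    have hb := rec_b n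
    have ih' := ih
    have key : ((n : ℚ) + 2) ^ 3 * (bseq (n + 2) * aseq (n + 1) - aseq (n + 2) * bseq (n + 1))
        = ((n : ℚ) + 1) ^ 3 * (bseq (n + 1) * aseq n - aseq (n + 1) * bseq n) := by
      linear_combination aseq (n + 1) * hb - bseq (n + 1) * ha
    rw [ih'] at key
    have h1 : ((n : ℚ) + 1) ≠ 0 := by positivity
    have h2 : ((n : ℚ) + 2) ≠ 0 := by positivity
    have e : bseq (n + 1 + 1) * aseq (n + 1) - aseq (n + 1 + 1) * bseq (n + 1)
        = 6 / ((n : ℚ) + 2) ^ 3 := by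
      rw [show n + 1 + 1 = n + 2 from rfl]
      field_simp at key ⊢
      linarith
    rw [e]
    push_cast
    ring_nf

/-- For `n ≥ 2`, the Casoratian `w n = b (n+1) * a n - a (n+1) * b n` equals
`6 / (n+1)³`. -/
theorem casoratian_eq (n : ℕ) (hn : 2 ≤ n) :
    bseq (n + 1) * aseq n - aseq (n + 1) * bseq n = 6 / ((n : ℚ) + 1) ^ 3 :=
  main n (by omega)
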